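/- If G is a triangle free graph and v a vertex of G, then the number of edges of G_v equals e(G) − d²(v), where d²(v) is the sum of the degrees of the neighbors of v. -/

import Mathlib

/-- A set of vertices is independent if no two of its elements are adjacent. -/
def SimpleGraph.IsIndepSet' {V : Type*} (G : SimpleGraph V) (s : Set V) : Prop :=
  s.Pairwise fun a b => ¬ G.Adj a b

/-- The independence number of a graph. -/
noncomputable def indepNum {V : Type*} (G : SimpleGraph V) : ℕ :=
  sSup {n | ∃ s : Set V, SimpleGraph.IsIndepSet' G s ∧ s.ncard = n}

/-- The closed neighbourhood `B(v;1) = {v} ∪ N(v)`. -/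
def ball {V : Type*} (G : SimpleGraph V) (v : V) : Set V :=
  insert v (G.neighborSet v)

open Finset

theorem edges_delete_ball_of_triangleFree {V : Type*} [Fintype V] (G : SimpleGraph V)
    [DecidableRel G.Adj] (hG : G.CliqueFree 3) (v : V) :
    (G.induce (ball G v)ᶜ).edgeSet.ncard + ∑ w ∈ G.neighborFinset v, G.degree w =
      G.edgeFinset.card := by
  classical
  letI : DecidableEq V := Classical.decEq V
  letI : DecidableEq (Sym2 V) := Classical.decEq _
  set N := G.neighborFinset v with hN
  have hsum : ∑ w ∈ N, G.degree w = (N.biUnion (fun w => G.incidenceFinset w)).card := by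
    rw [Finset.card_biUnion]
    · exact Finset.sum_congr rfl fun w _ => (G.card_incidenceFinset_eq_degree w).symm
    · intro w hw u hu hwu
      simp only [Function.onFun]
      rw [Finset.disjoint_left]
      intro e hew heu
      rw [SimpleGraph.mem_incidenceFinset] at hew heu
      obtain ⟨he, hwe⟩ := hew
      obtain ⟨_, hue⟩ := heu
      have : e = s(w, u) := (Sym2.mem_and_mem_iff hwu).mp ⟨hwe, hue⟩
      subst this
      have hadj : G.Adj w u := he
      exact hG _ (SimpleGraph.is3Clique_triple_iff.mpr
        ⟨(G.mem_neighborFinset v w).mp hw, (G.mem_neighborFinset v u).mp hu, hadj⟩)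
  have hbi : (N.biUnion (fun w => G.incidenceFinset w))
      = G.edgeFinset.filter (fun e => ∃ w ∈ N, w ∈ e) := by
    ext e
    simp only [Finset.mem_biUnion, Finset.mem_filter, SimpleGraph.mem_incidenceFinset,
      SimpleGraph.incidenceSet, Set.mem_setOf_eq, SimpleGraph.mem_edgeFinset]
    tauto
  have hsplit : (G.edgeFinset.filter (fun e => ∃ w ∈ N, w ∈ e)).card
      + (G.edgeFinset.filter (fun e => ¬ ∃ w ∈ N, w ∈ e)).card = G.edgeFinset.card :=
    Finset.card_filter_add_card_filter_not _
  have hmain : (G.induce (ball G v)ᶜ).edgeSet.ncard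
      = (G.edgeFinset.filter (fun e => ¬ ∃ w ∈ N, w ∈ e)).card := by
    have hinj : Function.Injective (Sym2.map (Subtype.val : ((ball G v)ᶜ : Set V) → V)) :=
      Sym2.map.injective Subtype.val_injective
    have himg : Sym2.map (Subtype.val : ((ball G v)ᶜ : Set V) → V) '' (G.induce (ball G v)ᶜ).edgeSet
        = ↑(G.edgeFinset.filter (fun e => ¬ ∃ w ∈ N, w ∈ e)) := by
      ext x
      simp only [Set.mem_image, Finset.coe_filter, Set.mem_setOf_eq,
        SimpleGraph.mem_edgeFinset]
      constructor
      · rintro ⟨e, he, rfl⟩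
        induction e with
        | h a b =>
          refine ⟨he, ?_⟩
          rintro ⟨w, hw, hwmem⟩
          have hwball : w ∈ ball G v := Set.mem_insert_of_mem _ ((G.mem_neighborFinset v w).mp hw)
          rw [Sym2.map_pair_eq, Sym2.mem_iff] at hwmem
          rcases hwmem with h | h
          · exact a.2 (h ▸ hwball)
          · exact b.2 (h ▸ hwball)
      · rintro ⟨he, hno⟩
        induction x with
        | h a b =>
          have hadj : G.Adj a b := he
          have ha : a ∈ (ball G v)ᶜ := by
            intro hab
            rcases hab with rfl | hab
            · exact hno ⟨b, (G.mem_neighborFinset _ _).mpr hadj, Sym2.mem_mk_right _ _⟩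
            · exact hno ⟨a, (G.mem_neighborFinset _ _).mpr hab, Sym2.mem_mk_left _ _⟩
          have hb : b ∈ (ball G v)ᶜ := by
            intro hbb
            rcases hbb with rfl | hbb
            · exact hno ⟨a, (G.mem_neighborFinset _ _).mpr hadj.symm, Sym2.mem_mk_left _ _⟩
            · exact hno ⟨b, (G.mem_neighborFinset _ _).mpr hbb, Sym2.mem_mk_right _ _⟩
          exact ⟨s(⟨a, ha⟩, ⟨b, hb⟩), hadj, rfl⟩
    calc (G.induce (ball G v)ᶜ).edgeSet.ncard
        = (Sym2.map (Subtype.val : ((ball G v)ᶜ : Set V) → V) ''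
            (G.induce (ball G v)ᶜ).edgeSet).ncard :=
          (Set.ncard_image_of_injective _ hinj).symm
      _ = _ := by rw [himg, Set.ncard_coe_finset]
  rw [hmain, hsum, hbi, Nat.add_comm, hsplit]
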